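/- arXiv:1607.05335 — 2 statements merged into one kernel-verified Lean document; each statement's English description precedes it below -/
import Mathlib

section
/- Let α > 2 be a real number, c > 0, and K a positive integer. Then ∫_0^∞ (1 − (1 + c r^{-α})^{-K}) · r dr = (c^{2/α}/α) · Σ_{m=1}^{K} binom(K,m) · B(K − m + 2/α, m − 2/α), where B denotes the Beta function. -/
open MeasureTheory Real

/-- The Beta function `B(x,y) = ∫_0^1 t^{x-1} (1-t)^{y-1} dt`. -/
noncomputable def betaFun (x y : ℝ) : ℝ :=
  ∫ t in Set.Ioo (0 : ℝ) 1, t ^ (x - 1) * (1 - t) ^ (y - 1)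

lemma betaIntegrand_integrableOn {x y : ℝ} (hx : 0 < x) (hy : 0 < y) :
    IntegrableOn (fun t : ℝ => t ^ (x - 1) * (1 - t) ^ (y - 1)) (Set.Ioo (0:ℝ) 1) := by
  have h := Complex.betaIntegral_convergent (u := (x:ℂ)) (v := (y:ℂ))
    (by simpa using hx) (by simpa using hy)
  rw [intervalIntegrable_iff] at h
  have h2 : IntegrableOn
      (fun t : ℝ => ‖(t : ℂ) ^ ((x:ℂ) - 1) * (1 - (t : ℂ)) ^ ((y:ℂ) - 1)‖)
      (Set.Ioo (0:ℝ) 1) := (IntegrableOn.mono_set h.norm (by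
        rw [Set.uIoc_of_le (by norm_num : (0:ℝ) ≤ 1)]
        exact Set.Ioo_subset_Ioc_self))
  refine h2.congr_fun (fun t ht => ?_) measurableSet_Ioo
  obtain ⟨ht0, ht1⟩ := ht
  beta_reduce
  rw [norm_mul,
    Complex.norm_cpow_eq_rpow_re_of_pos ht0,
    show (1 : ℂ) - (t : ℂ) = ((1 - t : ℝ) : ℂ) by push_cast; ring,
    Complex.norm_cpow_eq_rpow_re_of_pos (by linarith)]
  simp

lemma sum_choose_eq (K : ℕ) (u : ℝ) :
    ∑ m ∈ Finset.Icc 1 K, (K.choose m : ℝ) * ((1 - u) ^ m * u ^ (K - m))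
      = 1 - u ^ K := by
  have hpow := add_pow (1 - u) u K
  simp only [sub_add_cancel, one_pow] at hpow
  have he : Finset.Icc 1 K = (Finset.range (K + 1)).erase 0 := by
    ext m
    simp only [Finset.mem_Icc, Finset.mem_erase, Finset.mem_range]
    omega
  have hsplit := Finset.add_sum_erase (Finset.range (K + 1))
    (fun m => (1 - u) ^ m * u ^ (K - m) * (K.choose m : ℝ))
    (by simp : (0:ℕ) ∈ Finset.range (K + 1))
  simp only [pow_zero, Nat.sub_zero, Nat.choose_zero_right, Nat.cast_one, one_mul,
    mul_one] at hsplit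
  rw [he, Finset.sum_congr rfl (fun m _ => by ring :
    ∀ m ∈ (Finset.range (K + 1)).erase 0, (K.choose m : ℝ) * ((1 - u) ^ m * u ^ (K - m))
      = (1 - u) ^ m * u ^ (K - m) * (K.choose m : ℝ))]
  rw [← hpow] at hsplit
  linarith [hsplit]

/-- For `α > 2`, `c > 0` and `K ≥ 1`,
`∫_0^∞ (1 − (1 + c r^{-α})^{-K}) r dr
  = (c^{2/α}/α) ∑_{m=1}^{K} C(K,m) B(K − m + 2/α, m − 2/α)`. -/
theorem integral_one_sub_inv_one_add_rpow (α : ℝ) (hα : 2 < α) (c : ℝ) (hc : 0 < c)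
    (K : ℕ) (hK : 0 < K) :
    ∫ r in Set.Ioi (0 : ℝ), (1 - ((1 + c * r ^ (-α)) ^ K)⁻¹) * r
      = c ^ (2 / α) / α *
        ∑ m ∈ Finset.Icc 1 K,
          (K.choose m : ℝ) * betaFun ((K : ℝ) - m + 2 / α) ((m : ℝ) - 2 / α) := by
  have hα0 : (0:ℝ) < α := by linarith
  have hαne : α ≠ 0 := ne_of_gt hα0
  have h2α : 0 < 2 / α := by positivity
  have h2α1 : 2 / α < 1 := by rw [div_lt_one hα0]; linarith
  set f : ℝ → ℝ := fun u => (c * u / (1 - u)) ^ α⁻¹ with hf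
  set f' : ℝ → ℝ := fun u => α⁻¹ * (c * u / (1 - u)) ^ (α⁻¹ - 1) * (c / (1 - u) ^ 2)
    with hf'
  have hwpos : ∀ u ∈ Set.Ioo (0:ℝ) 1, 0 < c * u / (1 - u) := fun u hu => by
    have h1 := hu.1; have h2 := hu.2
    have : (0:ℝ) < 1 - u := by linarith
    positivity
  -- image
  have himg : f '' Set.Ioo (0:ℝ) 1 = Set.Ioi (0:ℝ) := by
    apply Set.eq_of_subset_of_subset
    · rintro r ⟨u, hu, rfl⟩
      exact Set.mem_Ioi.mpr (Real.rpow_pos_of_pos (hwpos u hu) _)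
    · intro r hr
      have hr0 : (0:ℝ) < r := hr
      have hrα : 0 < r ^ α := Real.rpow_pos_of_pos hr0 α
      refine ⟨r ^ α / (c + r ^ α), ⟨by positivity, ?_⟩, ?_⟩
      · rw [div_lt_one (by positivity)]; linarith
      · have h2 : c * (r ^ α / (c + r ^ α)) / ((1:ℝ) - r ^ α / (c + r ^ α)) = r ^ α := by
          rw [show (1 : ℝ) - r ^ α / (c + r ^ α) = c / (c + r ^ α) by field_simp; ring]
          field_simp
        show (c * (r ^ α / (c + r ^ α)) / ((1:ℝ) - r ^ α / (c + r ^ α))) ^ α⁻¹ = r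
        rw [h2, Real.rpow_rpow_inv hr0.le hαne]
  -- injectivity
  have hinj : Set.InjOn f (Set.Ioo (0:ℝ) 1) := by
    intro u hu v hv huv
    have h1 : c * u / (1 - u) = c * v / (1 - v) := by
      have := congrArg (fun x : ℝ => x ^ α) huv
      simpa [hf, Real.rpow_inv_rpow (hwpos u hu).le hαne,
        Real.rpow_inv_rpow (hwpos v hv).le hαne] using this
    have hu1 : (1:ℝ) - u ≠ 0 := by have := hu.2; intro h; linarith [sub_eq_zero.mp h]
    have hv1 : (1:ℝ) - v ≠ 0 := by have := hv.2; intro h; linarith [sub_eq_zero.mp h]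
    field_simp at h1
    nlinarith [h1, hc]
  -- derivative
  have hderiv : ∀ u ∈ Set.Ioo (0:ℝ) 1,
      HasDerivWithinAt f (f' u) (Set.Ioo (0:ℝ) 1) u := by
    intro u hu
    have hu1 : (0:ℝ) < 1 - u := by linarith [hu.2]
    have hg : HasDerivAt (fun u : ℝ => c * u / (1 - u)) (c / (1 - u) ^ 2) u := by
      have hd : HasDerivAt (fun u : ℝ => c * u / (1 - u))
          ((c * (1 - u) - c * u * (0 - 1)) / (1 - u) ^ 2) u :=
        HasDerivAt.div (by simpa using (hasDerivAt_id u).const_mul c)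
          ((hasDerivAt_const u (1:ℝ)).sub (hasDerivAt_id u)) (ne_of_gt hu1)
      convert hd using 1
      field_simp
      ring
    have hcomp := (Real.hasDerivAt_rpow_const
      (x := c * u / (1 - u)) (p := α⁻¹) (Or.inl (ne_of_gt (hwpos u hu)))).comp u hg
    have : HasDerivAt f (f' u) u := by
      exact hcomp
    exact this.hasDerivWithinAt
  -- change of variables
  rw [← himg, integral_image_eq_integral_abs_deriv_smul measurableSet_Ioo hderiv hinj]
  -- rewrite RHS as an integral
  have hxm : ∀ m ∈ Finset.Icc 1 K, (0:ℝ) < (K : ℝ) - m + 2 / α := by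
    intro m hm
    obtain ⟨h1, h2⟩ := Finset.mem_Icc.mp hm
    have : (m:ℝ) ≤ K := Nat.cast_le.mpr h2
    linarith
  have hym : ∀ m ∈ Finset.Icc 1 K, (0:ℝ) < (m : ℝ) - 2 / α := by
    intro m hm
    obtain ⟨h1, _⟩ := Finset.mem_Icc.mp hm
    have : (1:ℝ) ≤ m := by exact_mod_cast h1
    linarith
  have hrhs : ∑ m ∈ Finset.Icc 1 K,
      (K.choose m : ℝ) * betaFun ((K : ℝ) - m + 2 / α) ((m : ℝ) - 2 / α)
      = ∫ u in Set.Ioo (0:ℝ) 1, ∑ m ∈ Finset.Icc 1 K,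
          (K.choose m : ℝ) * (u ^ ((K : ℝ) - m + 2 / α - 1) *
            (1 - u) ^ ((m : ℝ) - 2 / α - 1)) := by
    rw [integral_finset_sum _ (fun m hm =>
      (betaIntegrand_integrableOn (hxm m hm) (hym m hm)).const_mul _)]
    exact Finset.sum_congr rfl fun m hm => by
      rw [betaFun, ← integral_const_mul _ _]
  rw [hrhs, ← integral_const_mul _ _]
  apply setIntegral_congr_fun measurableSet_Ioo
  intro u hu
  obtain ⟨hu0, hu1⟩ := hu
  have h1u : (0:ℝ) < 1 - u := by linarith
  have hw : (0:ℝ) < c * u / (1 - u) := hwpos u ⟨hu0, hu1⟩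
  simp only [hf, hf', smul_eq_mul]
  have hfu : (((c * u / (1 - u)) ^ α⁻¹ : ℝ)) ^ (-α) = (c * u / (1 - u))⁻¹ := by
    rw [← Real.rpow_mul hw.le, show α⁻¹ * -α = -1 by field_simp, Real.rpow_neg_one]
  have h3 : 1 + c * (c * u / (1 - u))⁻¹ = u⁻¹ := by
    have hune : u ≠ 0 := ne_of_gt hu0
    have h1une : (1:ℝ) - u ≠ 0 := ne_of_gt h1u
    field_simp
    ring
  have hsum : ∑ m ∈ Finset.Icc 1 K,
      (K.choose m : ℝ) * (u ^ ((K : ℝ) - m + 2 / α - 1) * (1 - u) ^ ((m : ℝ) - 2 / α - 1))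
      = (u ^ (2 / α - 1) * (1 - u) ^ (-(2 / α) - 1)) * (1 - u ^ K) := by
    have hterm : ∀ m ∈ Finset.Icc 1 K,
        (K.choose m : ℝ) * (u ^ ((K : ℝ) - m + 2 / α - 1) * (1 - u) ^ ((m : ℝ) - 2 / α - 1))
        = (u ^ (2 / α - 1) * (1 - u) ^ (-(2 / α) - 1)) *
            ((K.choose m : ℝ) * ((1 - u) ^ m * u ^ (K - m))) := by
      intro m hm
      obtain ⟨hm1, hm2⟩ := Finset.mem_Icc.mp hm
      have e1 : (K : ℝ) - m + 2 / α - 1 = (2 / α - 1) + ((K - m : ℕ) : ℝ) := by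
        push_cast [Nat.cast_sub hm2]; ring
      have e2 : (m : ℝ) - 2 / α - 1 = (-(2 / α) - 1) + (m : ℝ) := by ring
      rw [e1, e2, Real.rpow_add hu0, Real.rpow_add h1u, Real.rpow_natCast,
        Real.rpow_natCast]
      ring
    rw [Finset.sum_congr rfl hterm, ← Finset.mul_sum, sum_choose_eq]
  rw [hfu, h3, hsum, inv_pow, inv_inv, abs_of_pos (by positivity : (0:ℝ) <
    α⁻¹ * (c * u / (1 - u)) ^ (α⁻¹ - 1) * (c / (1 - u) ^ 2))]
  have hWm : (c * u / (1 - u)) ^ (α⁻¹ - 1) * (c * u / (1 - u)) ^ α⁻¹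
      = (c * u / (1 - u)) ^ (2 / α - 1) := by
    rw [← Real.rpow_add hw]; congr 1; ring
  have hW2 : (c * u / (1 - u)) ^ (2 / α - 1)
      = c ^ (2 / α - 1) * u ^ (2 / α - 1) * ((1 - u) ^ (2 / α - 1))⁻¹ := by
    rw [Real.div_rpow (by positivity) h1u.le, Real.mul_rpow hc.le hu0.le,
      div_eq_mul_inv]
  have hcc : c ^ (2 / α) = c ^ (2 / α - 1) * c := by
    rw [show (2:ℝ) / α = (2 / α - 1) + 1 by ring, Real.rpow_add hc, Real.rpow_one]
    norm_num
  have hu2 : (1 - u) ^ (-(2 / α) - 1) = ((1 - u) ^ (2 / α - 1))⁻¹ * (((1 - u) ^ 2 : ℝ))⁻¹ := by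
    rw [← Real.rpow_natCast (1 - u) 2, ← Real.rpow_neg h1u.le, ← Real.rpow_neg h1u.le,
      ← Real.rpow_add h1u]
    congr 1; push_cast; ring
  calc α⁻¹ * (c * u / (1 - u)) ^ (α⁻¹ - 1) * (c / (1 - u) ^ 2) *
        ((1 - u ^ K) * (c * u / (1 - u)) ^ α⁻¹)
      = (α⁻¹ * (c / (1 - u) ^ 2) * (1 - u ^ K)) *
          ((c * u / (1 - u)) ^ (α⁻¹ - 1) * (c * u / (1 - u)) ^ α⁻¹) := by ring
    _ = (α⁻¹ * (c / (1 - u) ^ 2) * (1 - u ^ K)) *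
          (c ^ (2 / α - 1) * u ^ (2 / α - 1) * ((1 - u) ^ (2 / α - 1))⁻¹) := by
        rw [hWm, hW2]
    _ = c ^ (2 / α) / α * (u ^ (2 / α - 1) * (1 - u) ^ (-(2 / α) - 1) * (1 - u ^ K)) := by
        rw [hcc, hu2]; ring
end

section
/- Let Δ be a positive integer and let h, X, Y, W be independent nonnegative random variables with h distributed according to the Gamma distribution with shape Δ and rate 1. Let a > 0 and b > 0, and write L_X, L_Y, L_W for the Laplace transforms of X, Y, W respectively. Then P( h > a(X + Y) + bW ) = Σ_{i=0}^{Δ−1} ( (−1)^i / i! ) Σ_{k=0}^{i} Σ_{n=0}^{i−k} binom(i,k) · binom(i−k, n) · a^{i−k} · b^{k} · L_X^{(i−k−n)}(a) · L_Y^{(n)}(a) · L_W^{(k)}(b), where L^{(m)} denotes the m-th derivative. -/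
open MeasureTheory ProbabilityTheory Real

section CoverageAux

open Set Filter Topology

lemma cov_pow_mul_exp_le (m : ℕ) {s x : ℝ} (hs : 0 < s) (hx : 0 ≤ x) :
    x ^ m * Real.exp (-(s * x)) ≤ m.factorial / s ^ m := by
  have h1 : (s * x) ^ m / m.factorial ≤ Real.exp (s * x) :=
    Real.pow_div_factorial_le_exp (s * x) (by positivity) m
  have h2 : x ^ m * Real.exp (-(s * x))
      = ((s * x) ^ m / m.factorial) * Real.exp (-(s * x)) * ((m.factorial : ℝ) / s ^ m) := by
    have hf : (m.factorial : ℝ) ≠ 0 := by positivity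
    field_simp [mul_pow]
    ring
  rw [h2]
  calc ((s * x) ^ m / m.factorial) * Real.exp (-(s * x)) * ((m.factorial : ℝ) / s ^ m)
      ≤ Real.exp (s * x) * Real.exp (-(s * x)) * ((m.factorial : ℝ) / s ^ m) := by
        gcongr
    _ = (m.factorial : ℝ) / s ^ m := by
        rw [← Real.exp_add]; simp

lemma cov_integrable_pow_mul_exp {Ω : Type*} [MeasurableSpace Ω] (P : Measure Ω)
    [IsProbabilityMeasure P] (m : ℕ) {s : ℝ} (hs : 0 < s) {X : Ω → ℝ} (hX : Measurable X)
    (hXpos : ∀ ω, 0 ≤ X ω) :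
    Integrable (fun ω => X ω ^ m * Real.exp (-(s * X ω))) P := by
  refine Integrable.mono' (integrable_const ((m.factorial : ℝ) / s ^ m)) ?_ ?_
  · exact ((hX.pow_const m).mul ((hX.const_mul s).neg.exp)).aestronglyMeasurable
  · filter_upwards with ω
    have h0 : (0:ℝ) ≤ X ω ^ m * Real.exp (-(s * X ω)) :=
      mul_nonneg (pow_nonneg (hXpos ω) m) (Real.exp_nonneg _)
    rw [Real.norm_eq_abs, abs_of_nonneg h0]
    exact cov_pow_mul_exp_le m hs (hXpos ω)

lemma cov_hasDerivAt_laplace {Ω : Type*} [MeasurableSpace Ω] (P : Measure Ω)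
    [IsProbabilityMeasure P] {X : Ω → ℝ} (hX : Measurable X) (hXpos : ∀ ω, 0 ≤ X ω)
    (m : ℕ) {s : ℝ} (hs : 0 < s) :
    HasDerivAt (fun t => ∫ ω, (-X ω) ^ m * Real.exp (-(t * X ω)) ∂P)
      (∫ ω, (-X ω) ^ (m + 1) * Real.exp (-(s * X ω)) ∂P) s := by
  have key := hasDerivAt_integral_of_dominated_loc_of_deriv_le
    (F := fun t ω => (-X ω) ^ m * Real.exp (-(t * X ω)))
    (F' := fun t ω => (-X ω) ^ (m + 1) * Real.exp (-(t * X ω)))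
    (bound := fun _ => (((m + 1).factorial : ℝ) / (s / 2) ^ (m + 1)))
    (μ := P) (x₀ := s) (Metric.ball_mem_nhds s (half_pos hs))
    ?_ ?_ ?_ ?_ ?_ ?_
  · exact key.2
  · filter_upwards with t
    exact (((hX.neg.pow_const m).mul ((hX.const_mul t).neg.exp))).aestronglyMeasurable
  · refine ((cov_integrable_pow_mul_exp P m hs hX hXpos).const_mul ((-1 : ℝ) ^ m)).congr
      (ae_of_all _ fun ω => ?_)
    rw [neg_pow]; ring
  · exact (((hX.neg.pow_const (m + 1)).mul ((hX.const_mul s).neg.exp))).aestronglyMeasurable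
  · filter_upwards with ω t ht
    have hts : s / 2 ≤ t := by
      have := abs_lt.mp (mem_ball_iff_norm.mp ht)
      linarith [this.1]
    have hxo := hXpos ω
    rw [Real.norm_eq_abs, abs_mul, abs_pow, abs_neg, abs_of_nonneg hxo,
      Real.abs_exp]
    calc X ω ^ (m + 1) * Real.exp (-(t * X ω))
        ≤ X ω ^ (m + 1) * Real.exp (-(s / 2 * X ω)) := by
          gcongr
      _ ≤ ((m + 1).factorial : ℝ) / (s / 2) ^ (m + 1) :=
          cov_pow_mul_exp_le (m + 1) (half_pos hs) hxo
  · exact integrable_const _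
  · filter_upwards with ω t ht
    have hd : HasDerivAt (fun t => Real.exp (-(t * X ω)))
        (Real.exp (-(t * X ω)) * -(1 * X ω)) t :=
      (((hasDerivAt_id t).mul_const (X ω)).neg).exp
    have := hd.const_mul ((-X ω) ^ m)
    exact this.congr_deriv (by rw [pow_succ]; ring)

lemma cov_iteratedDeriv_laplace {Ω : Type*} [MeasurableSpace Ω] (P : Measure Ω)
    [IsProbabilityMeasure P] {X : Ω → ℝ} (hX : Measurable X) (hXpos : ∀ ω, 0 ≤ X ω)
    (m : ℕ) : ∀ {s : ℝ}, 0 < s →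
    iteratedDeriv m (fun t => ∫ ω, Real.exp (-t * X ω) ∂P) s
      = ∫ ω, (-X ω) ^ m * Real.exp (-(s * X ω)) ∂P := by
  induction m with
  | zero =>
    intro s hs
    simp only [iteratedDeriv_zero, pow_zero, one_mul, neg_mul]
  | succ m ih =>
    intro s hs
    rw [iteratedDeriv_succ]
    have hev : iteratedDeriv m (fun t => ∫ ω, Real.exp (-t * X ω) ∂P)
        =ᶠ[nhds s] fun t => ∫ ω, (-X ω) ^ m * Real.exp (-(t * X ω)) ∂P := by
      filter_upwards [Ioi_mem_nhds hs] with t ht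
      exact ih ht
    rw [hev.deriv_eq]
    exact (cov_hasDerivAt_laplace P hX hXpos m hs).deriv

lemma cov_sum_telescope (n : ℕ) (x : ℝ) :
    ∑ i ∈ Finset.range (n + 1),
      (((n.factorial : ℝ) / i.factorial) * (i * x ^ (i - 1))
        - ((n.factorial : ℝ) / i.factorial) * x ^ i)
      = -(x ^ n) := by
  set v : ℕ → ℝ := fun j => ((n.factorial : ℝ) / j.factorial) * x ^ j with hv
  have hstep : ∀ j : ℕ, ((n.factorial : ℝ) / (j + 1).factorial) * (((j : ℝ) + 1) * x ^ (j + 1 - 1))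
      - ((n.factorial : ℝ) / (j + 1).factorial) * x ^ (j + 1) = v j - v (j + 1) := by
    intro j
    have h1 : ((j + 1).factorial : ℝ) ≠ 0 := by positivity
    have h2 : (j.factorial : ℝ) ≠ 0 := by positivity
    simp only [hv, Nat.add_sub_cancel, Nat.factorial_succ]
    push_cast
    field_simp
  rw [Finset.sum_range_succ']
  have hn : (n.factorial : ℝ) ≠ 0 := by positivity
  simp only [Nat.cast_add, Nat.cast_one, hstep, Finset.sum_range_sub' v]
  simp only [hv, Nat.factorial_zero, Nat.cast_one, div_one, pow_zero, mul_one,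
    Nat.cast_zero, zero_mul, mul_zero, zero_sub, div_self hn, one_mul]
  ring

lemma cov_F_hasDeriv (n : ℕ) (x : ℝ) :
    HasDerivAt (fun x => Real.exp (-x) * ∑ i ∈ Finset.range (n + 1),
        ((n.factorial : ℝ) / i.factorial) * x ^ i)
      (-(x ^ n * Real.exp (-x))) x := by
  have hsum : HasDerivAt (fun x : ℝ => ∑ i ∈ Finset.range (n + 1),
      ((n.factorial : ℝ) / i.factorial) * x ^ i)
      (∑ i ∈ Finset.range (n + 1), ((n.factorial : ℝ) / i.factorial) * (i * x ^ (i - 1))) x :=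
    HasDerivAt.fun_sum fun i _ => (hasDerivAt_pow i x).const_mul _
  have hexp : HasDerivAt (fun x : ℝ => Real.exp (-x)) (-Real.exp (-x)) x := by
    simpa using ((hasDerivAt_id x).neg).exp
  have hmul := hexp.mul hsum
  refine hmul.congr_deriv ?_
  have := cov_sum_telescope n x
  rw [Finset.sum_sub_distrib] at this
  linear_combination (Real.exp (-x)) * this

lemma cov_F_tendsto (n : ℕ) :
    Tendsto (fun x => Real.exp (-x) * ∑ i ∈ Finset.range (n + 1),
        ((n.factorial : ℝ) / i.factorial) * x ^ i) atTop (nhds 0) := by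
  have hfe : (fun x => Real.exp (-x) * ∑ i ∈ Finset.range (n + 1),
        ((n.factorial : ℝ) / i.factorial) * x ^ i)
      = fun x => ∑ i ∈ Finset.range (n + 1),
        ((n.factorial : ℝ) / i.factorial) * (x ^ i * Real.exp (-x)) := by
    funext x
    rw [Finset.mul_sum]
    exact Finset.sum_congr rfl fun i _ => by ring
  rw [hfe]
  have h := tendsto_finset_sum (Finset.range (n + 1)) (fun i _ =>
    (Real.tendsto_pow_mul_exp_neg_atTop_nhds_zero i).const_mul
      ((n.factorial : ℝ) / i.factorial))
  simpa using h

lemma cov_integral_pow_exp (n : ℕ) {t : ℝ} (ht : 0 ≤ t) :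
    ∫ x in Ioi t, x ^ n * Real.exp (-x)
      = Real.exp (-t) * ∑ i ∈ Finset.range (n + 1),
          ((n.factorial : ℝ) / i.factorial) * t ^ i := by
  have hint : IntegrableOn (fun x : ℝ => -(x ^ n * Real.exp (-x))) (Ioi t) := by
    refine (IntegrableOn.congr_fun (f := fun x : ℝ => Real.exp (-x) * x ^ ((n + 1 : ℝ) - 1))
      ?_ ?_ measurableSet_Ioi).neg
    · exact (Real.GammaIntegral_convergent (s := n + 1) (by positivity)).mono_set
        (Ioi_subset_Ioi ht)
    · intro x hx
      have hx0 : 0 < x := lt_of_le_of_lt ht hx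
      have he : ((n : ℝ) + 1) - 1 = (n : ℝ) := by ring
      simp only [he, Real.rpow_natCast]
      ring
  have key := integral_Ioi_of_hasDerivAt_of_tendsto'
    (f := fun x => Real.exp (-x) * ∑ i ∈ Finset.range (n + 1),
      ((n.factorial : ℝ) / i.factorial) * x ^ i)
    (f' := fun x => -(x ^ n * Real.exp (-x))) (a := t)
    (fun x _ => cov_F_hasDeriv n x) hint (cov_F_tendsto n)
  rw [integral_neg] at key
  have := neg_eq_iff_eq_neg.mp key
  rw [this]
  ring

lemma cov_gamma_tail (Δ : ℕ) (hΔ : 0 < Δ) {t : ℝ} (ht : 0 ≤ t) :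
    ((gammaMeasure Δ 1) (Ioi t)).toReal
      = Real.exp (-t) * ∑ i ∈ Finset.range Δ, t ^ i / i.factorial := by
  obtain ⟨n, rfl⟩ : ∃ n, Δ = n + 1 := ⟨Δ - 1, (Nat.succ_pred_eq_of_pos hΔ).symm⟩
  rw [gammaMeasure, withDensity_apply _ measurableSet_Ioi]
  simp only [gammaPDF]
  rw [← integral_eq_lintegral_of_nonneg_ae
    (ae_of_all _ fun x => gammaPDFReal_nonneg (by positivity) one_pos x)
    ((measurable_gammaPDFReal _ _).aestronglyMeasurable.restrict)]
  have hcong : EqOn (gammaPDFReal (↑(n + 1) : ℝ) 1)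
      (fun x => (1 / (n.factorial : ℝ)) * (x ^ n * Real.exp (-x))) (Ioi t) := by
    intro x hx
    have hx0 : (0 : ℝ) ≤ x := le_trans ht (le_of_lt hx)
    rw [gammaPDFReal, if_pos hx0]
    push_cast
    rw [Real.one_rpow, add_sub_cancel_right, Real.rpow_natCast,
      Real.Gamma_nat_eq_factorial]
    simp only [one_mul, one_div]
    ring
  rw [setIntegral_congr_fun measurableSet_Ioi hcong, integral_const_mul,
    cov_integral_pow_exp n ht]
  have hn : (n.factorial : ℝ) ≠ 0 := by positivity
  have hsum : ∑ i ∈ Finset.range (n + 1), ((n.factorial : ℝ) / i.factorial) * t ^ i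
      = (n.factorial : ℝ) * ∑ i ∈ Finset.range (n + 1), t ^ i / i.factorial := by
    rw [Finset.mul_sum]
    refine Finset.sum_congr rfl fun i _ => ?_
    rw [div_mul_eq_mul_div, mul_div_assoc]
  rw [hsum]
  field_simp

lemma cov_factorize {Ω : Type*} [MeasurableSpace Ω] (P : Measure Ω)
    {h X Y W : Ω → ℝ}
    (hX : Measurable X) (hY : Measurable Y) (hW : Measurable W)
    (hmeas4 : ∀ i, Measurable (![h, X, Y, W] i))
    (hindep : iIndepFun (m := fun _ : Fin 4 => (inferInstance : MeasurableSpace ℝ)) ![h, X, Y, W] P)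
    (u v q : ℝ → ℝ) (hu : Measurable u) (hv : Measurable v) (hq : Measurable q) :
    ∫ ω, u (X ω) * v (Y ω) * q (W ω) ∂P
      = (∫ ω, u (X ω) ∂P) * (∫ ω, v (Y ω) ∂P) * (∫ ω, q (W ω) ∂P) := by
  have h1 : IndepFun (fun ω => (Y ω, W ω)) X P :=
    hindep.indepFun_prodMk hmeas4 2 3 1 (by decide) (by decide)
  have h2 : IndepFun Y W P := hindep.indepFun (show (2 : Fin 4) ≠ 3 by decide)
  have h3 : IndepFun (fun ω => u (X ω)) (fun ω => v (Y ω) * q (W ω)) P := by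
    have := (h1.symm).comp (φ := u) (ψ := fun p : ℝ × ℝ => v p.1 * q p.2) hu
      ((hv.comp measurable_fst).mul (hq.comp measurable_snd))
    exact this
  have h4 : IndepFun (fun ω => v (Y ω)) (fun ω => q (W ω)) P := h2.comp hv hq
  have e1 : ∫ ω, u (X ω) * v (Y ω) * q (W ω) ∂P
      = ∫ ω, u (X ω) * (v (Y ω) * q (W ω)) ∂P :=
    integral_congr_ae (ae_of_all _ fun ω => by ring)
  rw [e1, h3.integral_fun_mul_eq_mul_integral ((hu.comp hX).aestronglyMeasurable)
    (((hv.comp hY).mul (hq.comp hW)).aestronglyMeasurable),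
    h4.integral_fun_mul_eq_mul_integral ((hv.comp hY).aestronglyMeasurable) ((hq.comp hW).aestronglyMeasurable),
    mul_assoc]

lemma cov_indep_Zh {Ω : Type*} [MeasurableSpace Ω] (P : Measure Ω) {a b : ℝ}
    {h X Y W : Ω → ℝ}
    (hmeas4 : ∀ i, Measurable (![h, X, Y, W] i))
    (hindep : iIndepFun (m := fun _ : Fin 4 => (inferInstance : MeasurableSpace ℝ)) ![h, X, Y, W] P) :
    IndepFun (fun ω => a * (X ω + Y ω) + b * W ω) h P := by
  have h1 := hindep.indepFun_finset {1, 2, 3} {0} (by decide) hmeas4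
  have h2 := h1.comp
    (φ := fun v : (({1, 2, 3} : Finset (Fin 4)) : Type) → ℝ =>
      a * (v ⟨1, by decide⟩ + v ⟨2, by decide⟩) + b * v ⟨3, by decide⟩)
    (ψ := fun v : (({0} : Finset (Fin 4)) : Type) → ℝ => v ⟨0, by decide⟩)
    (by fun_prop) (measurable_pi_apply _ :
      Measurable (fun v : (({0} : Finset (Fin 4)) : Type) → ℝ => v ⟨0, by decide⟩))
  exact h2

lemma cov_expand (a b : ℝ) (i : ℕ) (x y w : ℝ) :
    (a * (x + y) + b * w) ^ i * Real.exp (-(a * (x + y) + b * w)) =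
    ∑ k ∈ Finset.range (i + 1), ∑ n ∈ Finset.range (i - k + 1),
      (i.choose k : ℝ) * ((i - k).choose n : ℝ) * a ^ (i - k) * b ^ k *
        (x ^ (i - k - n) * Real.exp (-(a * x)) * (y ^ n * Real.exp (-(a * y))) *
         (w ^ k * Real.exp (-(b * w)))) := by
  have he : Real.exp (-(a * (x + y) + b * w))
      = Real.exp (-(a * x)) * Real.exp (-(a * y)) * Real.exp (-(b * w)) := by
    rw [← Real.exp_add, ← Real.exp_add]
    ring_nf
  have hp : (a * (x + y) + b * w) ^ i
      = ∑ k ∈ Finset.range (i + 1), (b * w) ^ k * (a * (x + y)) ^ (i - k) * (i.choose k : ℝ) := by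
    rw [show a * (x + y) + b * w = b * w + a * (x + y) by ring, add_pow]
  rw [hp, he, Finset.sum_mul]
  refine Finset.sum_congr rfl fun k hk => ?_
  have hq : (x + y) ^ (i - k)
      = ∑ n ∈ Finset.range (i - k + 1), y ^ n * x ^ (i - k - n) * ((i - k).choose n : ℝ) := by
    rw [show x + y = y + x by ring, add_pow]
  rw [mul_pow a (x + y), hq, Finset.mul_sum, Finset.mul_sum, Finset.sum_mul, Finset.sum_mul]
  refine Finset.sum_congr rfl fun n hn => ?_
  ring

end CoverageAux

/-- Core identity of Theorem 1: if `h ~ Gamma(Δ,1)` and `X, Y, W` are nonnegative and the four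
random variables are independent, then for `a, b > 0`,
`P(h > a(X+Y) + bW) = ∑_{i=0}^{Δ−1} ((−1)^i/i!) ∑_{k=0}^{i} ∑_{n=0}^{i−k} C(i,k) C(i−k,n)
a^{i−k} b^k L_X^{(i−k−n)}(a) L_Y^{(n)}(a) L_W^{(k)}(b)`. -/
theorem coverage_core_identity {Ω : Type*} [MeasurableSpace Ω]
    (P : Measure Ω) [IsProbabilityMeasure P]
    (Δ : ℕ) (hΔ : 0 < Δ) (a b : ℝ) (ha : 0 < a) (hb : 0 < b)
    (h X Y W : Ω → ℝ)
    (hh : Measurable h) (hX : Measurable X) (hY : Measurable Y) (hW : Measurable W)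
    (hXpos : ∀ ω, 0 ≤ X ω) (hYpos : ∀ ω, 0 ≤ Y ω) (hWpos : ∀ ω, 0 ≤ W ω)
    (hindep : iIndepFun (m := fun _ : Fin 4 => (inferInstance : MeasurableSpace ℝ))
      ![h, X, Y, W] P)
    (hlaw : Measure.map h P = gammaMeasure Δ 1) :
    (P {ω | a * (X ω + Y ω) + b * W ω < h ω}).toReal
      = ∑ i ∈ Finset.range Δ, (-1 : ℝ) ^ i / (Nat.factorial i) *
          ∑ k ∈ Finset.range (i + 1), ∑ n ∈ Finset.range (i - k + 1),
            (i.choose k : ℝ) * ((i - k).choose n : ℝ) * a ^ (i - k) * b ^ k *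
              iteratedDeriv (i - k - n) (fun s => ∫ ω, Real.exp (-s * X ω) ∂P) a *
              iteratedDeriv n (fun s => ∫ ω, Real.exp (-s * Y ω) ∂P) a *
              iteratedDeriv k (fun s => ∫ ω, Real.exp (-s * W ω) ∂P) b := by
  classical
  have hmeas4 : ∀ i, Measurable (![h, X, Y, W] i) := by
    intro i; fin_cases i <;> assumption
  set Z : Ω → ℝ := fun ω => a * (X ω + Y ω) + b * W ω with hZdef
  have hZm : Measurable Z := ((hX.add hY).const_mul a).add (hW.const_mul b)
  have hZpos : ∀ ω, 0 ≤ Z ω := by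
    intro ω
    have h1 := hXpos ω; have h2 := hYpos ω; have h3 := hWpos ω
    have : (0:ℝ) ≤ a * (X ω + Y ω) + b * W ω := by positivity
    simpa [hZdef] using this
  have hindZh : IndepFun Z h P := cov_indep_Zh P hmeas4 hindep
  haveI hgprob : IsProbabilityMeasure (gammaMeasure Δ 1) :=
    isProbabilityMeasure_gammaMeasure (by positivity) one_pos
  -- Step A : reduce to an integral of the gamma tail against the law of Z
  have hstepA : (P {ω | Z ω < h ω}).toReal
      = ∫ ω, ((gammaMeasure Δ 1) (Set.Ioi (Z ω))).toReal ∂P := by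
    have hms : MeasurableSet {p : ℝ × ℝ | p.1 < p.2} :=
      measurableSet_lt measurable_fst measurable_snd
    have hmap : P.map (fun ω => (Z ω, h ω)) = (P.map Z).prod (P.map h) :=
      (indepFun_iff_map_prod_eq_prod_map_map hZm.aemeasurable hh.aemeasurable).mp hindZh
    have hs1 : {ω | Z ω < h ω}
        = (fun ω => (Z ω, h ω)) ⁻¹' {p : ℝ × ℝ | p.1 < p.2} := rfl
    have hanti : Measurable fun z : ℝ => (gammaMeasure Δ 1) (Set.Ioi z) :=
      Antitone.measurable fun u v huv => measure_mono (Set.Ioi_subset_Ioi huv)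
    rw [hs1, ← Measure.map_apply (hZm.prodMk hh) hms, hmap, hlaw,
      Measure.prod_apply hms]
    have hpre : ∀ z : ℝ, (Prod.mk z ⁻¹' {p : ℝ × ℝ | p.1 < p.2}) = Set.Ioi z :=
      fun z => rfl
    simp_rw [hpre]
    rw [lintegral_map hanti hZm]
    exact (integral_toReal ((hanti.comp hZm).aemeasurable)
      (ae_of_all _ fun ω => measure_lt_top _ _)).symm
  rw [hstepA]
  -- Step B : plug in the gamma tail formula
  have htail : (fun ω => ((gammaMeasure Δ 1) (Set.Ioi (Z ω))).toReal)
      = fun ω => ∑ i ∈ Finset.range Δ,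
          (1 / (i.factorial : ℝ)) * (Z ω ^ i * Real.exp (-(Z ω))) := by
    funext ω
    rw [cov_gamma_tail Δ hΔ (hZpos ω), Finset.mul_sum]
    exact Finset.sum_congr rfl fun i _ => by ring
  rw [htail]
  have hZint : ∀ i : ℕ, Integrable (fun ω => Z ω ^ i * Real.exp (-(Z ω))) P := by
    intro i
    exact (cov_integrable_pow_mul_exp P i one_pos hZm hZpos).congr
      (ae_of_all _ fun ω => by simp)
  rw [integral_finset_sum _ fun i _ => ((hZint i).const_mul _)]
  refine Finset.sum_congr rfl fun i _ => ?_
  rw [integral_const_mul]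
  -- integrability of the triple products
  have hTint : ∀ p q r : ℕ, Integrable (fun ω =>
      X ω ^ p * Real.exp (-(a * X ω)) * (Y ω ^ q * Real.exp (-(a * Y ω))) *
      (W ω ^ r * Real.exp (-(b * W ω)))) P := by
    intro p q r
    refine Integrable.mono' (integrable_const
      (((p.factorial : ℝ) / a ^ p) * ((q.factorial : ℝ) / a ^ q)
        * ((r.factorial : ℝ) / b ^ r))) ?_ ?_
    · exact ((((hX.pow_const p).mul ((hX.const_mul a).neg.exp)).mul
        ((hY.pow_const q).mul ((hY.const_mul a).neg.exp))).mul
        ((hW.pow_const r).mul ((hW.const_mul b).neg.exp))).aestronglyMeasurable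
    · filter_upwards with ω
      have h1 := cov_pow_mul_exp_le p ha (hXpos ω)
      have h2 := cov_pow_mul_exp_le q ha (hYpos ω)
      have h3 := cov_pow_mul_exp_le r hb (hWpos ω)
      have n1 : (0:ℝ) ≤ X ω ^ p * Real.exp (-(a * X ω)) :=
        mul_nonneg (pow_nonneg (hXpos ω) p) (Real.exp_nonneg _)
      have n2 : (0:ℝ) ≤ Y ω ^ q * Real.exp (-(a * Y ω)) :=
        mul_nonneg (pow_nonneg (hYpos ω) q) (Real.exp_nonneg _)
      have n3 : (0:ℝ) ≤ W ω ^ r * Real.exp (-(b * W ω)) :=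
        mul_nonneg (pow_nonneg (hWpos ω) r) (Real.exp_nonneg _)
      rw [Real.norm_eq_abs, abs_of_nonneg (by positivity)]
      refine mul_le_mul (mul_le_mul h1 h2 n2 (by positivity)) h3 n3 (by positivity)
  -- Step C : expand the integral into the triple sum of products of integrals
  have hexp : ∫ ω, Z ω ^ i * Real.exp (-(Z ω)) ∂P
      = ∑ k ∈ Finset.range (i + 1), ∑ n ∈ Finset.range (i - k + 1),
          (i.choose k : ℝ) * ((i - k).choose n : ℝ) * a ^ (i - k) * b ^ k *
          ((∫ ω, X ω ^ (i - k - n) * Real.exp (-(a * X ω)) ∂P) *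
           (∫ ω, Y ω ^ n * Real.exp (-(a * Y ω)) ∂P) *
           (∫ ω, W ω ^ k * Real.exp (-(b * W ω)) ∂P)) := by
    have e1 : ∀ ω, Z ω ^ i * Real.exp (-(Z ω))
        = ∑ k ∈ Finset.range (i + 1), ∑ n ∈ Finset.range (i - k + 1),
            (i.choose k : ℝ) * ((i - k).choose n : ℝ) * a ^ (i - k) * b ^ k *
              (X ω ^ (i - k - n) * Real.exp (-(a * X ω))
                * (Y ω ^ n * Real.exp (-(a * Y ω)))
                * (W ω ^ k * Real.exp (-(b * W ω)))) := by
      intro ω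
      simp only [hZdef]
      exact cov_expand a b i (X ω) (Y ω) (W ω)
    rw [integral_congr_ae (ae_of_all _ e1)]
    rw [integral_finset_sum _ fun k _ =>
      integrable_finset_sum _ fun n _ => ((hTint _ _ _).const_mul _)]
    refine Finset.sum_congr rfl fun k hk => ?_
    rw [integral_finset_sum _ fun n _ => ((hTint _ _ _).const_mul _)]
    refine Finset.sum_congr rfl fun n hn => ?_
    rw [integral_const_mul]
    congr 1
    exact cov_factorize P hX hY hW hmeas4 hindep
      (fun t => t ^ (i - k - n) * Real.exp (-(a * t)))
      (fun t => t ^ n * Real.exp (-(a * t)))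
      (fun t => t ^ k * Real.exp (-(b * t)))
      ((measurable_id.pow_const _).mul ((measurable_id.const_mul a).neg.exp))
      ((measurable_id.pow_const _).mul ((measurable_id.const_mul a).neg.exp))
      ((measurable_id.pow_const _).mul ((measurable_id.const_mul b).neg.exp))
  rw [hexp]
  -- Step D : rewrite the iterated derivatives of the Laplace transforms
  have hIX : ∀ m : ℕ, iteratedDeriv m (fun s => ∫ ω, Real.exp (-s * X ω) ∂P) a
      = (-1 : ℝ) ^ m * ∫ ω, X ω ^ m * Real.exp (-(a * X ω)) ∂P := by
    intro m
    rw [cov_iteratedDeriv_laplace P hX hXpos m ha, ← integral_const_mul]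
    exact integral_congr_ae (ae_of_all _ fun ω => by rw [neg_pow]; ring)
  have hIY : ∀ m : ℕ, iteratedDeriv m (fun s => ∫ ω, Real.exp (-s * Y ω) ∂P) a
      = (-1 : ℝ) ^ m * ∫ ω, Y ω ^ m * Real.exp (-(a * Y ω)) ∂P := by
    intro m
    rw [cov_iteratedDeriv_laplace P hY hYpos m ha, ← integral_const_mul]
    exact integral_congr_ae (ae_of_all _ fun ω => by rw [neg_pow]; ring)
  have hIW : ∀ m : ℕ, iteratedDeriv m (fun s => ∫ ω, Real.exp (-s * W ω) ∂P) b
      = (-1 : ℝ) ^ m * ∫ ω, W ω ^ m * Real.exp (-(b * W ω)) ∂P := by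
    intro m
    rw [cov_iteratedDeriv_laplace P hW hWpos m hb, ← integral_const_mul]
    exact integral_congr_ae (ae_of_all _ fun ω => by rw [neg_pow]; ring)
  simp only [hIX, hIY, hIW, Finset.mul_sum]
  refine Finset.sum_congr rfl fun k hk => ?_
  refine Finset.sum_congr rfl fun n hn => ?_
  have hk' : k ≤ i := Nat.lt_succ_iff.mp (Finset.mem_range.mp hk)
  have hn' : n ≤ i - k := Nat.lt_succ_iff.mp (Finset.mem_range.mp hn)
  have key : ((-1:ℝ)) ^ (i - k - n) * ((-1:ℝ)) ^ n * ((-1:ℝ)) ^ k * ((-1:ℝ)) ^ i = 1 := by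
    rw [← pow_add, ← pow_add, ← pow_add]
    have he : i - k - n + n + k + i = i + i := by omega
    rw [he]
    exact Even.neg_one_pow ⟨i, rfl⟩
  have hfac : (i.factorial : ℝ) ≠ 0 := by positivity
  linear_combination (-((i.choose k : ℝ) * ((i - k).choose n : ℝ) * a ^ (i - k) * b ^ k *
    (∫ ω, X ω ^ (i - k - n) * Real.exp (-(a * X ω)) ∂P) *
    (∫ ω, Y ω ^ n * Real.exp (-(a * Y ω)) ∂P) *
    (∫ ω, W ω ^ k * Real.exp (-(b * W ω)) ∂P)) / (i.factorial : ℝ)) * key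
end
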